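/- One step of the difference Riccati recursion admits a block form: if X_t = V_tᵀ(I + T_tT_tᵀ)⁻¹V_t, then CᵀC + AᵀX_t(I + BBᵀX_t)⁻¹A = V_{t+1}ᵀ(I + T_{t+1}T_{t+1}ᵀ)⁻¹V_{t+1}, where V_{t+1} = [C; V_tA] (stacked vertically) and T_{t+1} = [[0, 0]; [V_tB, T_t]] (block lower triangular). -/

import Mathlib

open Matrix

theorem stmt_8 {n m l q r : ℕ}
    (A : Matrix (Fin n) (Fin n) ℝ) (B : Matrix (Fin n) (Fin m) ℝ)
    (C : Matrix (Fin l) (Fin n) ℝ)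
    (V : Matrix (Fin q) (Fin n) ℝ) (T : Matrix (Fin q) (Fin r) ℝ)
    (X : Matrix (Fin n) (Fin n) ℝ)
    (hX : X = Vᵀ * (1 + T * Tᵀ)⁻¹ * V) :
    Cᵀ * C + Aᵀ * X * (1 + B * Bᵀ * X)⁻¹ * A =
      (fromRows C (V * A))ᵀ *
        (1 + (fromBlocks 0 0 (V * B) T) * (fromBlocks 0 0 (V * B) T)ᵀ :
          Matrix (Fin l ⊕ Fin q) (Fin l ⊕ Fin q) ℝ)⁻¹ *
        fromRows C (V * A) := by
  set P : Matrix (Fin q) (Fin q) ℝ := 1 + T * Tᵀ with hPdef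
  set S : Matrix (Fin q) (Fin q) ℝ := 1 + ((V * B) * (V * B)ᵀ + T * Tᵀ) with hSdef
  have hTT : (T * Tᵀ).PosSemidef := by
    simpa using posSemidef_self_mul_conjTranspose T
  have hVB : ((V * B) * (V * B)ᵀ).PosSemidef := by
    simpa using posSemidef_self_mul_conjTranspose (V * B)
  have hP : P.PosDef := Matrix.PosDef.one.add_posSemidef hTT
  have hS : S.PosDef := Matrix.PosDef.one.add_posSemidef (hVB.add hTT)
  have hPu : IsUnit P.det := isUnit_iff_isUnit_det _ |>.1 hP.isUnit
  have hSu : IsUnit S.det := isUnit_iff_isUnit_det _ |>.1 hS.isUnit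
  -- the block matrix
  have hblock : (1 : Matrix (Fin l ⊕ Fin q) (Fin l ⊕ Fin q) ℝ) +
      (fromBlocks 0 0 (V * B) T) * (fromBlocks 0 0 (V * B) T)ᵀ
        = fromBlocks 1 0 0 S := by
    rw [fromBlocks_transpose, fromBlocks_multiply, ← fromBlocks_one, fromBlocks_add]
    simp [hSdef]
  have hblockinv : (fromBlocks (1 : Matrix (Fin l) (Fin l) ℝ) 0 0 S)⁻¹
      = fromBlocks 1 0 0 S⁻¹ := by
    apply inv_eq_right_inv
    rw [fromBlocks_multiply]
    simp [Matrix.mul_nonsing_inv _ hSu, ← fromBlocks_one]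
  -- invertibility of 1 + B Bᵀ X
  have hXB : (Bᵀ * X * B).PosSemidef := by
    rw [hX]
    have : Bᵀ * (Vᵀ * P⁻¹ * V) * B = (V * B)ᴴ * P⁻¹ * (V * B) := by
      simp [Matrix.mul_assoc]
    rw [this]
    exact hP.inv.posSemidef.conjTranspose_mul_mul_same (V * B)
  have hIu : IsUnit (1 + B * Bᵀ * X).det := by
    have h1 : (1 : Matrix (Fin n) (Fin n) ℝ) + B * Bᵀ * X = 1 + B * (Bᵀ * X) := by
      rw [Matrix.mul_assoc]
    rw [h1, Matrix.det_one_add_mul_comm]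
    have h2 : (1 : Matrix (Fin m) (Fin m) ℝ) + Bᵀ * X * B
        = 1 + Bᵀ * X * B := rfl
    have hPD : ((1 : Matrix (Fin m) (Fin m) ℝ) + Bᵀ * X * B).PosDef :=
      Matrix.PosDef.one.add_posSemidef hXB
    have := hPD.det_pos
    rw [← Matrix.mul_assoc] at *
    exact this.ne'.isUnit
  -- key identity
  have hSP : S = P + V * B * Bᵀ * Vᵀ := by
    rw [hSdef, hPdef]
    have h3 : (V * B) * (V * B)ᵀ = V * B * Bᵀ * Vᵀ := by
      rw [transpose_mul]; simp [Matrix.mul_assoc]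
    rw [h3]; abel
  have hkey : Vᵀ * S⁻¹ * V * (1 + B * Bᵀ * X) = X := by
    have h2 : P * P⁻¹ = 1 := Matrix.mul_nonsing_inv _ hPu
    have e1 : V * (1 + B * Bᵀ * (Vᵀ * P⁻¹ * V)) = S * (P⁻¹ * V) := by
      rw [hSP]
      simp only [Matrix.mul_add, Matrix.add_mul, Matrix.mul_one, ← Matrix.mul_assoc]
      rw [h2, Matrix.one_mul]
    rw [hX, Matrix.mul_assoc (Vᵀ * S⁻¹) V, e1, Matrix.mul_assoc Vᵀ S⁻¹,
      Matrix.nonsing_inv_mul_cancel_left _ _ hSu, ← Matrix.mul_assoc]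
  have hinv : X * (1 + B * Bᵀ * X)⁻¹ = Vᵀ * S⁻¹ * V := by
    have h := congrArg (fun M => M * (1 + B * Bᵀ * X)⁻¹) hkey
    rw [Matrix.mul_nonsing_inv_cancel_right _ _ hIu] at h
    exact h.symm
  have hmain : Aᵀ * X * (1 + B * Bᵀ * X)⁻¹ * A = Aᵀ * (Vᵀ * S⁻¹ * V) * A := by
    rw [Matrix.mul_assoc Aᵀ X, hinv]
  -- expand RHS
  rw [hblock, hblockinv, transpose_fromRows, fromCols_mul_fromBlocks,
    fromCols_mul_fromRows, hmain]
  simp [Matrix.mul_assoc, transpose_mul]
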